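/- Assume XᵀX is invertible, fix j ∈ Fin p, let η_j = X·(XᵀX)⁻¹·e_j and c_j = η_j/‖η_j‖₂², fix ν ∈ ℝ^n, penalties λ > 0 and λ_high > 0, and a set H ⊆ Fin p. For z ∈ ℝ let β̂_λ(z) and β̂_high(z) be the unique lasso solutions for (X, ν + z·c_j, λ) and (X, ν + z·c_j, λ_high) respectively. Then there exist real numbers a ≤ b and order-connected sets I_1, …, I_m ⊆ ℝ with m ≤ 2^{|H|} such that {z ∈ ℝ : β̂_λ(z)_j ≠ 0 and the active set of β̂_high(z) equals H} = ((−∞, a) ∪ (b, ∞)) ∩ (I_1 ∪ ⋯ ∪ I_m). -/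

import Mathlib

open scoped BigOperators

/-- The lasso objective `f_{X,y,λ}(β) = (1/2)‖y − Xβ‖₂² + λ∑|β_j|`. -/
noncomputable def lassoObj {n : ℕ} {κ : Type*} [Fintype κ]
    (X : Matrix (Fin n) κ ℝ) (y : Fin n → ℝ) (lam : ℝ) (β : κ → ℝ) : ℝ :=
  (1 / 2) * ∑ i, (y i - X.mulVec β i) ^ 2 + lam * ∑ j, |β j|

/-- A lasso solution is a global minimizer of the lasso objective. -/
def IsLassoSolution {n : ℕ} {κ : Type*} [Fintype κ]
    (X : Matrix (Fin n) κ ℝ) (y : Fin n → ℝ) (lam : ℝ) (βhat : κ → ℝ) : Prop :=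
  ∀ β : κ → ℝ, lassoObj X y lam βhat ≤ lassoObj X y lam β
/-- Strong convexity of the quadratic part at a minimizer. -/
lemma lasso_strong_min {n p : ℕ} (X : Matrix (Fin n) (Fin p) ℝ) (y : Fin n → ℝ)
    {lam : ℝ} (hlam : 0 ≤ lam) {βh : Fin p → ℝ} (h : IsLassoSolution X y lam βh)
    (β : Fin p → ℝ) :
    lassoObj X y lam βh + (1/4) * ∑ i, (X.mulVec β i - X.mulVec βh i)^2
      ≤ lassoObj X y lam β := by
  have hm := h ((1/2 : ℝ) • (β + βh))
  have hmv : ∀ i, X.mulVec ((1/2 : ℝ) • (β + βh)) i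
      = (X.mulVec β i + X.mulVec βh i)/2 := by
    intro i
    rw [Matrix.mulVec_smul, Matrix.mulVec_add]
    simp
    ring
  have hquad : ∑ i, (y i - X.mulVec ((1/2 : ℝ) • (β + βh)) i)^2
      = (1/2) * ∑ i, (y i - X.mulVec β i)^2 + (1/2) * ∑ i, (y i - X.mulVec βh i)^2
        - (1/4) * ∑ i, (X.mulVec β i - X.mulVec βh i)^2 := by
    rw [Finset.mul_sum, Finset.mul_sum, Finset.mul_sum, ← Finset.sum_add_distrib,
      ← Finset.sum_sub_distrib]
    refine Finset.sum_congr rfl fun i _ => ?_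
    rw [hmv i]; ring
  have habs : ∑ k, |((1/2 : ℝ) • (β + βh)) k| ≤ (1/2) * ∑ k, |β k| + (1/2) * ∑ k, |βh k| := by
    rw [Finset.mul_sum, Finset.mul_sum, ← Finset.sum_add_distrib]
    refine Finset.sum_le_sum fun k _ => ?_
    have h1 : ((1/2 : ℝ) • (β + βh)) k = (1/2)*β k + (1/2)*βh k := by
      simp; ring
    rw [h1]
    calc |(1/2)*β k + (1/2)*βh k| ≤ |(1/2)*β k| + |(1/2)*βh k| := abs_add_le _ _
    _ = (1/2)*|β k| + (1/2)*|βh k| := by rw [abs_mul, abs_mul, abs_of_pos (by norm_num : (0:ℝ) < 1/2)]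
  unfold lassoObj at hm ⊢
  rw [hquad] at hm
  have h2 := mul_le_mul_of_nonneg_left habs hlam
  linarith

/-- Cross difference identity along the line `z ↦ ν + z • c`. -/
lemma lasso_cross {n p : ℕ} (X : Matrix (Fin n) (Fin p) ℝ) (ν c : Fin n → ℝ)
    (lam z z' : ℝ) (β β' : Fin p → ℝ) :
    lassoObj X (ν + z • c) lam β' + lassoObj X (ν + z' • c) lam β
      - lassoObj X (ν + z • c) lam β - lassoObj X (ν + z' • c) lam β'
    = (z' - z) * ∑ i, c i * (X.mulVec β' i - X.mulVec β i) := by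
  unfold lassoObj
  simp only [Pi.add_apply, Pi.smul_apply, smul_eq_mul]
  have hsum : ∑ i, (ν i + z*c i - X.mulVec β' i)^2 + ∑ i, (ν i + z'*c i - X.mulVec β i)^2
      - ∑ i, (ν i + z*c i - X.mulVec β i)^2 - ∑ i, (ν i + z'*c i - X.mulVec β' i)^2
      = 2*((z'-z) * ∑ i, c i * (X.mulVec β' i - X.mulVec β i)) := by
    rw [Finset.mul_sum, Finset.mul_sum, ← Finset.sum_add_distrib, ← Finset.sum_sub_distrib,
      ← Finset.sum_sub_distrib]
    refine Finset.sum_congr rfl fun i _ => ?_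
    ring
  linarith

/-- KKT necessary conditions at a lasso minimizer. -/
lemma lasso_kkt {n p : ℕ} (X : Matrix (Fin n) (Fin p) ℝ) (y : Fin n → ℝ)
    {lam : ℝ} (hlam : 0 < lam) {βh : Fin p → ℝ} (h : IsLassoSolution X y lam βh)
    (k : Fin p) :
    |∑ i, X i k * (y i - X.mulVec βh i)| ≤ lam ∧
      lam * |βh k| = (∑ i, X i k * (y i - X.mulVec βh i)) * βh k := by
  set g : ℝ := ∑ i, X i k * (y i - X.mulVec βh i) with hg
  set A : ℝ := ∑ i, (X i k)^2 with hA
  have hA0 : (0:ℝ) ≤ A := Finset.sum_nonneg fun i _ => sq_nonneg _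
  have master : ∀ t : ℝ, 0 ≤ t^2/2 * A - t * g + lam * (|βh k + t| - |βh k|) := by
    intro t
    have hm := h (βh + t • (Pi.single k (1:ℝ) : Fin p → ℝ))
    have hmv : ∀ i, X.mulVec (βh + t • (Pi.single k (1:ℝ) : Fin p → ℝ)) i = X.mulVec βh i + t * X i k := by
      intro i
      rw [Matrix.mulVec_add, Matrix.mulVec_smul]
      simp [Matrix.mulVec_single]
    have hquad : ∑ i, (y i - X.mulVec (βh + t • (Pi.single k (1:ℝ) : Fin p → ℝ)) i)^2
        = ∑ i, (y i - X.mulVec βh i)^2 - 2*t*g + t^2*A := by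
      have h1 : ∀ i, (y i - X.mulVec (βh + t • (Pi.single k (1:ℝ) : Fin p → ℝ)) i)^2
          = (y i - X.mulVec βh i)^2 - 2*t*(X i k * (y i - X.mulVec βh i)) + t^2*(X i k)^2 := by
        intro i; rw [hmv i]; ring
      rw [Finset.sum_congr rfl fun i _ => h1 i]
      rw [Finset.sum_add_distrib, Finset.sum_sub_distrib, ← Finset.mul_sum, ← Finset.mul_sum,
        hg, hA]
    have habs : ∑ l, |(βh + t • (Pi.single k (1:ℝ) : Fin p → ℝ)) l| = ∑ l, |βh l| + (|βh k + t| - |βh k|) := by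
      have hpt : ∀ l, |(βh + t • (Pi.single k (1:ℝ) : Fin p → ℝ)) l|
          = |βh l| + (if l = k then |βh k + t| - |βh k| else 0) := by
        intro l
        by_cases hl : l = k
        · subst hl; simp [Pi.single_apply]
        · simp [Pi.single_apply, hl]
      rw [Finset.sum_congr rfl fun l _ => hpt l, Finset.sum_add_distrib]
      simp
    unfold lassoObj at hm
    rw [hquad, habs] at hm
    nlinarith [hm]
  have hgle : g ≤ lam := by
    refine le_of_forall_sub_le fun ε hε => ?_
    have hA1 : (0:ℝ) < A + 1 := by linarith
    set t : ℝ := 2*ε/(A+1) with ht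
    have ht0 : 0 < t := by positivity
    have h1 := master t
    have h2 : |βh k + t| - |βh k| ≤ t := by
      have h3 := abs_add_le (βh k) t
      rw [abs_of_pos ht0] at h3; linarith
    have h3 : 0 ≤ t^2/2*A - t*g + lam*t :=
      le_trans h1 (by nlinarith [mul_le_mul_of_nonneg_left h2 hlam.le])
    have h4 : g ≤ t*A/2 + lam := by nlinarith
    have h5 : t*(A+1) = 2*ε := by
      rw [ht]; field_simp
    have h6 : t*A/2 ≤ ε := by nlinarith
    linarith
  have hgge : -lam ≤ g := by
    have key : -lam ≤ g + 0 := by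
      have h0 : (-lam) - g ≤ 0 := by
        refine le_of_forall_sub_le fun ε hε => ?_
        have hA1 : (0:ℝ) < A + 1 := by linarith
        set s : ℝ := 2*ε/(A+1) with hs
        have hs0 : 0 < s := by positivity
        have h1 := master (-s)
        have h2 : |βh k + -s| - |βh k| ≤ s := by
          have h3 := abs_add_le (βh k) (-s)
          rw [abs_neg, abs_of_pos hs0] at h3; linarith
        have h3 : 0 ≤ s^2/2*A + s*g + lam*s := by
          nlinarith [mul_le_mul_of_nonneg_left h2 hlam.le]
        have h4 : -g ≤ s*A/2 + lam := by nlinarith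
        have h5 : s*(A+1) = 2*ε := by
          rw [hs]; field_simp
        have h6 : s*A/2 ≤ ε := by nlinarith
        linarith
      linarith
    linarith
  refine ⟨abs_le.mpr ⟨hgge, hgle⟩, ?_⟩
  rcases lt_trichotomy (βh k) 0 with hb | hb | hb
  · -- g = -lam
    have hg2 : g + lam ≤ 0 := by
      have h0 : (g + lam) - 0 ≤ 0 := by
        refine le_of_forall_sub_le fun ε hε => ?_
        have hA1 : (0:ℝ) < A + 1 := by linarith
        set t : ℝ := min (-(βh k)/2) (2*ε/(A+1)) with htd
        have ht0 : 0 < t := lt_min (by linarith) (by positivity)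
        have htb : t < -(βh k) := lt_of_le_of_lt (min_le_left _ _) (by linarith)
        have h1 := master t
        have habs : |βh k + t| - |βh k| = -t := by
          rw [abs_of_neg hb, abs_of_neg (by linarith : βh k + t < 0)]; ring
        rw [habs] at h1
        have h4 : g + lam ≤ t*A/2 := by nlinarith
        have h6 : t*A/2 ≤ ε := by
          have h7 : t ≤ 2*ε/(A+1) := min_le_right _ _
          have h8 : t*A ≤ (2*ε/(A+1))*A := mul_le_mul_of_nonneg_right h7 hA0
          have h9 : (2*ε/(A+1))*(A+1) = 2*ε := by field_simp
          nlinarith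
        linarith
      linarith
    have hgeq : g = -lam := le_antisymm (by linarith) hgge
    rw [hgeq, abs_of_neg hb]; ring
  · simp [hb]
  · -- g = lam
    have hg2 : lam - g ≤ 0 := by
      have h0 : (lam - g) - 0 ≤ 0 := by
        refine le_of_forall_sub_le fun ε hε => ?_
        have hA1 : (0:ℝ) < A + 1 := by linarith
        set s : ℝ := min (βh k/2) (2*ε/(A+1)) with hsd
        have hs0 : 0 < s := lt_min (by linarith) (by positivity)
        have hsb : s < βh k := lt_of_le_of_lt (min_le_left _ _) (by linarith)
        have h1 := master (-s)
        have habs : |βh k + -s| - |βh k| = -s := by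
          rw [abs_of_pos hb, abs_of_pos (by linarith : 0 < βh k + -s)]; ring
        rw [habs] at h1
        have h4 : lam - g ≤ s*A/2 := by nlinarith
        have h6 : s*A/2 ≤ ε := by
          have h7 : s ≤ 2*ε/(A+1) := min_le_right _ _
          have h8 : s*A ≤ (2*ε/(A+1))*A := mul_le_mul_of_nonneg_right h7 hA0
          have h9 : (2*ε/(A+1))*(A+1) = 2*ε := by field_simp
          nlinarith
        linarith
      linarith
    have hgeq : g = lam := le_antisymm hgle (by linarith)
    rw [hgeq, abs_of_pos hb]

/-- KKT sufficient conditions for a lasso minimizer. -/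
lemma lasso_of_kkt {n p : ℕ} (X : Matrix (Fin n) (Fin p) ℝ) (y : Fin n → ℝ)
    (lam : ℝ) (βh : Fin p → ℝ)
    (hk : ∀ k, |∑ i, X i k * (y i - X.mulVec βh i)| ≤ lam ∧
      lam * |βh k| = (∑ i, X i k * (y i - X.mulVec βh i)) * βh k) :
    IsLassoSolution X y lam βh := by
  intro β
  set g : Fin p → ℝ := fun k => ∑ i, X i k * (y i - X.mulVec βh i) with hgdef
  -- swap identity
  have hswap : ∑ i, (y i - X.mulVec βh i) * (X.mulVec β i - X.mulVec βh i)
      = ∑ k, g k * (β k - βh k) := by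
    have h1 : ∀ i, (y i - X.mulVec βh i) * (X.mulVec β i - X.mulVec βh i)
        = ∑ k, X i k * (y i - X.mulVec βh i) * (β k - βh k) := by
      intro i
      have h2 : X.mulVec β i - X.mulVec βh i = ∑ k, X i k * (β k - βh k) := by
        simp [Matrix.mulVec, dotProduct, mul_sub, Finset.sum_sub_distrib]
      rw [h2, Finset.mul_sum]
      exact Finset.sum_congr rfl fun k _ => by ring
    rw [Finset.sum_congr rfl fun i _ => h1 i, Finset.sum_comm]
    refine Finset.sum_congr rfl fun k _ => ?_
    rw [hgdef]
    simp only []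
    rw [Finset.sum_mul]
  have hquad : ∑ i, (y i - X.mulVec β i)^2
      = ∑ i, (y i - X.mulVec βh i)^2 - 2 * ∑ k, g k * (β k - βh k)
        + ∑ i, (X.mulVec β i - X.mulVec βh i)^2 := by
    rw [← hswap, Finset.mul_sum, ← Finset.sum_sub_distrib, ← Finset.sum_add_distrib]
    exact Finset.sum_congr rfl fun i _ => by ring
  have hQ : (0:ℝ) ≤ ∑ i, (X.mulVec β i - X.mulVec βh i)^2 :=
    Finset.sum_nonneg fun i _ => sq_nonneg _
  have hterm : ∀ k, lam * |βh k| - g k * βh k ≤ lam * |β k| - g k * β k := by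
    intro k
    have h1 := (hk k).2
    have h2 : g k * β k ≤ lam * |β k| := by
      calc g k * β k ≤ |g k * β k| := le_abs_self _
      _ = |g k| * |β k| := abs_mul _ _
      _ ≤ lam * |β k| := mul_le_mul_of_nonneg_right (hk k).1 (abs_nonneg _)
    have h1' : lam * |βh k| = g k * βh k := h1
    linarith [h1', h2]
  have hsum : ∑ k, (lam * |βh k| - g k * βh k) ≤ ∑ k, (lam * |β k| - g k * β k) :=
    Finset.sum_le_sum fun k _ => hterm k
  rw [Finset.sum_sub_distrib, Finset.sum_sub_distrib, ← Finset.mul_sum, ← Finset.mul_sum] at hsum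
  have hgb : ∑ k, g k * (β k - βh k) = ∑ k, g k * β k - ∑ k, g k * βh k := by
    rw [← Finset.sum_sub_distrib]
    exact Finset.sum_congr rfl fun k _ => by ring
  unfold lassoObj
  rw [hquad, hgb]
  linarith
section Dev
variable {n p : ℕ}

/-- Interpolation of lasso solutions with compatible sign patterns. -/
lemma lasso_interp (X : Matrix (Fin n) (Fin p) ℝ) (ν c : Fin n → ℝ)
    {lam : ℝ} (hlam : 0 < lam) (z₀ z₁ z : ℝ) (hz : z ∈ Set.Icc z₀ z₁)
    (β₀ β₁ : Fin p → ℝ)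
    (h₀ : IsLassoSolution X (ν + z₀ • c) lam β₀)
    (h₁ : IsLassoSolution X (ν + z₁ • c) lam β₁)
    (hcompat : ∀ k, (0 < β₀ k ∧ 0 < β₁ k) ∨ (β₀ k < 0 ∧ β₁ k < 0) ∨ (β₀ k = 0 ∧ β₁ k = 0)) :
    ∃ β : Fin p → ℝ, IsLassoSolution X (ν + z • c) lam β ∧
      ∀ k, (0 < β₀ k → 0 < β k) ∧ (β₀ k < 0 → β k < 0) ∧ (β₀ k = 0 → β k = 0) := by
  obtain ⟨hz0, hz1⟩ := hz
  rcases eq_or_lt_of_le (le_trans hz0 hz1) with heq | hlt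
  · -- z₀ = z₁, so z = z₀
    have hzz : z = z₀ := le_antisymm (heq ▸ hz1) hz0
    subst hzz
    exact ⟨β₀, h₀, fun k => ⟨fun h => h, fun h => h, fun h => h⟩⟩
  · set t : ℝ := (z - z₀)/(z₁ - z₀) with htdef
    have hd : (0:ℝ) < z₁ - z₀ := by linarith
    have ht0 : 0 ≤ t := div_nonneg (by linarith) hd.le
    have ht1 : t ≤ 1 := by
      rw [htdef, div_le_one hd]; linarith
    have hzt : z = (1-t)*z₀ + t*z₁ := by
      rw [htdef]; field_simp; ring
    set β : Fin p → ℝ := fun k => (1-t)*β₀ k + t*β₁ k with hβdef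
    have hyt : ∀ i, (ν + z • c) i = (1-t)*((ν + z₀ • c) i) + t*((ν + z₁ • c) i) := by
      intro i
      simp only [Pi.add_apply, Pi.smul_apply, smul_eq_mul]
      rw [hzt]; ring
    have hmv : ∀ i, X.mulVec β i = (1-t)*(X.mulVec β₀ i) + t*(X.mulVec β₁ i) := by
      intro i
      have : β = (1-t) • β₀ + t • β₁ := by
        funext k; simp [hβdef]
      rw [this, Matrix.mulVec_add, Matrix.mulVec_smul, Matrix.mulVec_smul]
      simp
    have hres : ∀ i, (ν + z • c) i - X.mulVec β i
        = (1-t)*((ν + z₀ • c) i - X.mulVec β₀ i) + t*((ν + z₁ • c) i - X.mulVec β₁ i) := by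
      intro i; rw [hyt i, hmv i]; ring
    -- gradients
    set g₀ : Fin p → ℝ := fun k => ∑ i, X i k * ((ν + z₀ • c) i - X.mulVec β₀ i) with hg₀
    set g₁ : Fin p → ℝ := fun k => ∑ i, X i k * ((ν + z₁ • c) i - X.mulVec β₁ i) with hg₁
    have hgt : ∀ k, ∑ i, X i k * ((ν + z • c) i - X.mulVec β i) = (1-t)*g₀ k + t*g₁ k := by
      intro k
      rw [hg₀, hg₁]
      simp only []
      rw [Finset.mul_sum, Finset.mul_sum, ← Finset.sum_add_distrib]
      refine Finset.sum_congr rfl fun i _ => ?_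
      rw [hres i]; ring
    have hk₀ := fun k => lasso_kkt X (ν + z₀ • c) hlam h₀ k
    have hk₁ := fun k => lasso_kkt X (ν + z₁ • c) hlam h₁ k
    have hsol : IsLassoSolution X (ν + z • c) lam β := by
      apply lasso_of_kkt
      intro k
      rw [hgt k]
      have ha₀ : |g₀ k| ≤ lam := (hk₀ k).1
      have ha₁ : |g₁ k| ≤ lam := (hk₁ k).1
      have habs : |(1-t)*g₀ k + t*g₁ k| ≤ lam := by
        calc |(1-t)*g₀ k + t*g₁ k| ≤ |(1-t)*g₀ k| + |t*g₁ k| := abs_add_le _ _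
        _ = (1-t)*|g₀ k| + t*|g₁ k| := by
            rw [abs_mul, abs_mul, abs_of_nonneg ht0, abs_of_nonneg (by linarith : (0:ℝ) ≤ 1-t)]
        _ ≤ (1-t)*lam + t*lam := by
            have := mul_le_mul_of_nonneg_left ha₀ (by linarith : (0:ℝ) ≤ 1-t)
            have := mul_le_mul_of_nonneg_left ha₁ ht0
            linarith
        _ = lam := by ring
      refine ⟨habs, ?_⟩
      rcases hcompat k with ⟨hp₀, hp₁⟩ | ⟨hn₀, hn₁⟩ | ⟨he₀, he₁⟩
      · have hgl₀ : g₀ k = lam := by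
          have h1 : lam * |β₀ k| = g₀ k * β₀ k := (hk₀ k).2
          rw [abs_of_pos hp₀] at h1
          have : (lam - g₀ k) * β₀ k = 0 := by linarith [h1]
          rcases mul_eq_zero.mp this with h | h
          · linarith
          · exact absurd h (ne_of_gt hp₀)
        have hgl₁ : g₁ k = lam := by
          have h1 : lam * |β₁ k| = g₁ k * β₁ k := (hk₁ k).2
          rw [abs_of_pos hp₁] at h1
          have : (lam - g₁ k) * β₁ k = 0 := by linarith [h1]
          rcases mul_eq_zero.mp this with h | h
          · linarith
          · exact absurd h (ne_of_gt hp₁)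
        have hβpos : 0 < β k := by
          rw [hβdef]
          simp only []
          rcases eq_or_lt_of_le ht0 with h | h
          · rw [← h]; simpa using hp₀
          · have : 0 < t * β₁ k := mul_pos h hp₁
            have : 0 ≤ (1-t) * β₀ k := mul_nonneg (by linarith) hp₀.le
            nlinarith
        rw [hgl₀, hgl₁, abs_of_pos hβpos]
        ring
      · have hgl₀ : g₀ k = -lam := by
          have h1 : lam * |β₀ k| = g₀ k * β₀ k := (hk₀ k).2
          rw [abs_of_neg hn₀] at h1
          have : (lam + g₀ k) * β₀ k = 0 := by linarith [h1]
          rcases mul_eq_zero.mp this with h | h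
          · linarith
          · exact absurd h (ne_of_lt hn₀)
        have hgl₁ : g₁ k = -lam := by
          have h1 : lam * |β₁ k| = g₁ k * β₁ k := (hk₁ k).2
          rw [abs_of_neg hn₁] at h1
          have : (lam + g₁ k) * β₁ k = 0 := by linarith [h1]
          rcases mul_eq_zero.mp this with h | h
          · linarith
          · exact absurd h (ne_of_lt hn₁)
        have hβneg : β k < 0 := by
          rw [hβdef]
          simp only []
          rcases eq_or_lt_of_le ht0 with h | h
          · rw [← h]; simpa using hn₀
          · have : t * β₁ k < 0 := mul_neg_of_pos_of_neg h hn₁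
            have : (1-t) * β₀ k ≤ 0 := mul_nonpos_of_nonneg_of_nonpos (by linarith) hn₀.le
            nlinarith
        rw [hgl₀, hgl₁, abs_of_neg hβneg]
        ring
      · have hβ0 : β k = 0 := by rw [hβdef]; simp [he₀, he₁]
        rw [hβ0]
        simp
    refine ⟨β, hsol, fun k => ?_⟩
    rcases hcompat k with ⟨hp₀, hp₁⟩ | ⟨hn₀, hn₁⟩ | ⟨he₀, he₁⟩
    · refine ⟨fun _ => ?_, fun h => absurd h (by linarith), fun h => absurd h (by linarith)⟩
      rw [hβdef]; simp only []
      rcases eq_or_lt_of_le ht0 with h | h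
      · rw [← h]; simpa using hp₀
      · nlinarith [mul_pos h hp₁, mul_nonneg (by linarith : (0:ℝ) ≤ 1-t) hp₀.le]
    · refine ⟨fun h => absurd h (by linarith), fun _ => ?_, fun h => absurd h (by linarith)⟩
      rw [hβdef]; simp only []
      rcases eq_or_lt_of_le ht0 with h | h
      · rw [← h]; simpa using hn₀
      · nlinarith [mul_neg_of_pos_of_neg h hn₁,
          mul_nonpos_of_nonneg_of_nonpos (by linarith : (0:ℝ) ≤ 1-t) hn₀.le]
    · refine ⟨fun h => absurd h (by linarith [he₀]), fun h => absurd h (by linarith [he₀]),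
        fun _ => ?_⟩
      rw [hβdef]; simp [he₀, he₁]

end Dev
/-- Truncation set for the stable-ℓ₁ method: the event `{j ∈ M̂(z)} ∩ {Ĥ(z) = H}`
along the line `z ↦ ν + z·c_j` has the form
`((−∞,a) ∪ (b,∞)) ∩ (I_1 ∪ ⋯ ∪ I_m)` with `a ≤ b` and `m ≤ 2^{|H|}` intervals. -/
theorem stable_l1_truncation_set {n p : ℕ} (X : Matrix (Fin n) (Fin p) ℝ)
    (lam lamHigh : ℝ) (hlam : 0 < lam) (hlamHigh : 0 < lamHigh)
    (hinv : IsUnit (X.transpose * X)) (j : Fin p)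
    (η : Fin n → ℝ)
    (hη : η = X.mulVec ((X.transpose * X)⁻¹.mulVec (Pi.single j 1)))
    (c : Fin n → ℝ) (hc : c = (∑ i, η i ^ 2)⁻¹ • η)
    (ν : Fin n → ℝ) (H : Finset (Fin p))
    (βlam βhigh : ℝ → Fin p → ℝ)
    (hβlam : ∀ z : ℝ, IsLassoSolution X (ν + z • c) lam (βlam z) ∧
      ∀ β : Fin p → ℝ, IsLassoSolution X (ν + z • c) lam β → β = βlam z)
    (hβhigh : ∀ z : ℝ, IsLassoSolution X (ν + z • c) lamHigh (βhigh z) ∧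
      ∀ β : Fin p → ℝ, IsLassoSolution X (ν + z • c) lamHigh β → β = βhigh z) :
    ∃ a b : ℝ, a ≤ b ∧ ∃ m ≤ 2 ^ H.card, ∃ I : Fin m → Set ℝ,
      (∀ i, (I i).OrdConnected) ∧
      {z : ℝ | βlam z j ≠ 0 ∧ {k | βhigh z k ≠ 0} = (H : Set (Fin p))}
        = (Set.Iio a ∪ Set.Ioi b) ∩ ⋃ i, I i := by
  classical
  set d : Fin p → ℝ := (X.transpose * X)⁻¹.mulVec (Pi.single j 1) with hddef
  -- basic algebraic facts about η and c
  have hXtη : X.transpose.mulVec η = Pi.single j 1 := by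
    rw [hη, Matrix.mulVec_mulVec, Matrix.mulVec_mulVec,
      Matrix.mul_nonsing_inv _ ((Matrix.isUnit_iff_isUnit_det _).mp hinv), Matrix.one_mulVec]
  have hηvec : ∀ v : Fin p → ℝ, ∑ i, η i * X.mulVec v i = v j := by
    intro v
    have h1 : ∑ i, η i * X.mulVec v i = ∑ k, (X.transpose.mulVec η) k * v k := by
      simp only [Matrix.mulVec, dotProduct, Matrix.transpose_apply, Finset.mul_sum,
        Finset.sum_mul]
      rw [Finset.sum_comm]
      exact Finset.sum_congr rfl fun k _ => Finset.sum_congr rfl fun i _ => by ring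
    rw [h1, hXtη]
    simp [Pi.single_apply]
  set S : ℝ := ∑ i, η i ^ 2 with hSdef
  have hηne : η ≠ 0 := by
    intro h0
    have h1 := congrFun hXtη j
    rw [h0] at h1
    simp [Matrix.mulVec_zero] at h1
  have hS : 0 < S := by
    obtain ⟨i₀, hi₀⟩ := Function.ne_iff.mp hηne
    refine Finset.sum_pos' (fun i _ => sq_nonneg _) ⟨i₀, Finset.mem_univ _, ?_⟩
    have h2 : η i₀ ≠ 0 := by simpa using hi₀
    positivity
  have hηc : ∑ i, η i * c i = 1 := by
    rw [hc]
    simp only [Pi.smul_apply, smul_eq_mul]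
    rw [show ∑ i, η i * ((∑ i, η i ^ 2)⁻¹ * η i) = (∑ i, η i ^ 2)⁻¹ * ∑ i, η i ^ 2 by
      rw [Finset.mul_sum]; exact Finset.sum_congr rfl fun i _ => by ring]
    exact inv_mul_cancel₀ hS.ne'
  have hcvec : ∀ v : Fin p → ℝ, ∑ i, c i * X.mulVec v i = S⁻¹ * v j := by
    intro v
    rw [hc]
    simp only [Pi.smul_apply, smul_eq_mul]
    rw [show ∑ i, (∑ i, η i ^ 2)⁻¹ * η i * X.mulVec v i
        = (∑ i, η i ^ 2)⁻¹ * ∑ i, η i * X.mulVec v i by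
      rw [Finset.mul_sum]; exact Finset.sum_congr rfl fun i _ => by ring]
    rw [hηvec v]
  -- key monotonicity/Lipschitz bound
  have hmono : ∀ z z' : ℝ, z ≤ z' →
      βlam z j ≤ βlam z' j ∧ βlam z' j ≤ βlam z j + 2*(z' - z) := by
    intro z z' hzz
    set Q : ℝ := ∑ i, (X.mulVec (βlam z') i - X.mulVec (βlam z) i)^2 with hQdef
    have hQ0 : 0 ≤ Q := Finset.sum_nonneg fun i _ => sq_nonneg _
    have h1 := lasso_strong_min X (ν + z • c) hlam.le (hβlam z).1 (βlam z')
    have h2 := lasso_strong_min X (ν + z' • c) hlam.le (hβlam z').1 (βlam z)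
    have h3 := lasso_cross X ν c lam z z' (βlam z) (βlam z')
    have hsym : ∑ i, (X.mulVec (βlam z) i - X.mulVec (βlam z') i)^2 = Q := by
      rw [hQdef]; exact Finset.sum_congr rfl fun i _ => by ring
    rw [hsym] at h2
    have h4 : ∑ i, c i * (X.mulVec (βlam z') i - X.mulVec (βlam z) i)
        = S⁻¹ * (βlam z' j - βlam z j) := by
      rw [show ∑ i, c i * (X.mulVec (βlam z') i - X.mulVec (βlam z) i)
          = ∑ i, c i * X.mulVec (βlam z') i - ∑ i, c i * X.mulVec (βlam z) i by
        rw [← Finset.sum_sub_distrib]; exact Finset.sum_congr rfl fun i _ => by ring]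
      rw [hcvec _, hcvec _]; ring
    rw [h4] at h3
    set D : ℝ := βlam z' j - βlam z j with hDdef
    have hkey : (1/2) * Q ≤ (z' - z) * (S⁻¹ * D) := by linarith
    have hkey2 : (1/2) * (S * Q) ≤ (z' - z) * D := by
      have h := mul_le_mul_of_nonneg_left hkey hS.le
      calc (1/2) * (S * Q) = S * ((1/2) * Q) := by ring
      _ ≤ S * ((z' - z) * (S⁻¹ * D)) := h
      _ = (S * S⁻¹) * ((z' - z) * D) := by ring
      _ = (z' - z) * D := by rw [mul_inv_cancel₀ hS.ne']; ring
    have hCS : D^2 ≤ S * Q := by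
      have hdj : D = ∑ i, η i * (X.mulVec (βlam z') i - X.mulVec (βlam z) i) := by
        rw [show ∑ i, η i * (X.mulVec (βlam z') i - X.mulVec (βlam z) i)
            = ∑ i, η i * X.mulVec (βlam z') i - ∑ i, η i * X.mulVec (βlam z) i by
          rw [← Finset.sum_sub_distrib]; exact Finset.sum_congr rfl fun i _ => by ring]
        rw [hηvec _, hηvec _]
      rw [hdj, hSdef, hQdef]
      exact Finset.sum_mul_sq_le_sq_mul_sq Finset.univ _ _
    have hzz' : (0:ℝ) ≤ z' - z := sub_nonneg.mpr hzz
    have hSQ : 0 ≤ S * Q := mul_nonneg hS.le hQ0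
    have hD0 : 0 ≤ D := by nlinarith [hkey2, hCS, hSQ, hzz']
    have hDle : D ≤ 2*(z' - z) := by
      rcases eq_or_lt_of_le hD0 with h | h
      · rw [← h]; linarith
      · nlinarith [hkey2, hCS, h]
    constructor
    · have : βlam z' j - βlam z j = D := rfl
      linarith
    · have : βlam z' j - βlam z j = D := rfl
      linarith
  -- continuity of z ↦ βlam z j
  have hcont : Continuous (fun z => βlam z j) := by
    refine LipschitzWith.continuous (K := 2) (LipschitzWith.of_dist_le_mul fun z z' => ?_)
    rw [Real.dist_eq, Real.dist_eq]
    have h2 : ((2:NNReal):ℝ) = (2:ℝ) := by norm_num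
    rw [h2]
    rcases le_total z z' with h | h
    · obtain ⟨h1, h2'⟩ := hmono z z' h
      rw [abs_of_nonpos (by linarith), abs_of_nonpos (by linarith)]
      linarith
    · obtain ⟨h1, h2'⟩ := hmono z' z h
      rw [abs_of_nonneg (by linarith), abs_of_nonneg (by linarith)]
      linarith
  -- extreme values force signs
  set E : ℝ := ∑ i, η i * ν i with hEdef
  set L : ℝ := ∑ k, |d k| with hLdef
  have hXd : X.mulVec d = η := hη.symm
  have hext : ∀ z : ℝ, (0 ≤ βlam z j → -E - S/2 - lam * L ≤ z) ∧
      (βlam z j ≤ 0 → z ≤ S/2 + lam * L - E) := by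
    intro z
    have hsol := (hβlam z).1
    have hyβ : ∑ i, η i * ((ν + z • c) i - X.mulVec (βlam z) i)
        = E + z - βlam z j := by
      have h1 : ∑ i, η i * ((ν + z • c) i - X.mulVec (βlam z) i)
          = ∑ i, (η i * ν i + z * (η i * c i) - η i * X.mulVec (βlam z) i) := by
        refine Finset.sum_congr rfl fun i _ => ?_
        simp only [Pi.add_apply, Pi.smul_apply, smul_eq_mul]
        ring
      rw [h1, Finset.sum_sub_distrib, Finset.sum_add_distrib, ← Finset.mul_sum, hηc,
        hηvec (βlam z), hEdef]
      ring
    constructor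
    · intro hb
      have hm := hsol (βlam z - d)
      have hmv : ∀ i, X.mulVec (βlam z - d) i = X.mulVec (βlam z) i - η i := by
        intro i
        rw [Matrix.mulVec_sub, hXd]
        simp
      have hquad : ∑ i, ((ν + z • c) i - X.mulVec (βlam z - d) i)^2
          = ∑ i, ((ν + z • c) i - X.mulVec (βlam z) i)^2
            + 2 * ∑ i, η i * ((ν + z • c) i - X.mulVec (βlam z) i) + S := by
        have h1 : ∀ i, ((ν + z • c) i - X.mulVec (βlam z - d) i)^2
            = ((ν + z • c) i - X.mulVec (βlam z) i)^2
              + 2 * (η i * ((ν + z • c) i - X.mulVec (βlam z) i)) + η i ^2 := by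
          intro i; rw [hmv i]; ring
        rw [Finset.sum_congr rfl fun i _ => h1 i, Finset.sum_add_distrib,
          Finset.sum_add_distrib, ← Finset.mul_sum, hSdef]
      have habs : ∑ k, |(βlam z - d) k| ≤ ∑ k, |βlam z k| + L := by
        rw [hLdef, ← Finset.sum_add_distrib]
        refine Finset.sum_le_sum fun k _ => ?_
        have : (βlam z - d) k = βlam z k - d k := rfl
        rw [this]
        exact abs_sub _ _
      unfold lassoObj at hm
      rw [hquad, hyβ] at hm
      have hmul := mul_le_mul_of_nonneg_left habs hlam.le
      linarith
    · intro hb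
      have hm := hsol (βlam z + d)
      have hmv : ∀ i, X.mulVec (βlam z + d) i = X.mulVec (βlam z) i + η i := by
        intro i
        rw [Matrix.mulVec_add, hXd]
        simp
      have hquad : ∑ i, ((ν + z • c) i - X.mulVec (βlam z + d) i)^2
          = ∑ i, ((ν + z • c) i - X.mulVec (βlam z) i)^2
            - 2 * ∑ i, η i * ((ν + z • c) i - X.mulVec (βlam z) i) + S := by
        have h1 : ∀ i, ((ν + z • c) i - X.mulVec (βlam z + d) i)^2
            = ((ν + z • c) i - X.mulVec (βlam z) i)^2
              - 2 * (η i * ((ν + z • c) i - X.mulVec (βlam z) i)) + η i ^2 := by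
          intro i; rw [hmv i]; ring
        rw [Finset.sum_congr rfl fun i _ => h1 i, Finset.sum_add_distrib,
          Finset.sum_sub_distrib, ← Finset.mul_sum, hSdef]
      have habs : ∑ k, |(βlam z + d) k| ≤ ∑ k, |βlam z k| + L := by
        rw [hLdef, ← Finset.sum_add_distrib]
        refine Finset.sum_le_sum fun k _ => ?_
        have : (βlam z + d) k = βlam z k + d k := rfl
        rw [this]
        exact abs_add_le _ _
      unfold lassoObj at hm
      rw [hquad, hyβ] at hm
      have hmul := mul_le_mul_of_nonneg_left habs hlam.le
      linarith
  set Clo : ℝ := -E - S/2 - lam * L - 1 with hClo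
  set Chi : ℝ := S/2 + lam * L - E + 1 with hChi
  have hneg : βlam Clo j < 0 := by
    by_contra hcon
    push_neg at hcon
    have := (hext Clo).1 hcon
    rw [hClo] at this
    linarith
  have hpos : 0 < βlam Chi j := by
    by_contra hcon
    push_neg at hcon
    have := (hext Chi).2 hcon
    rw [hChi] at this
    linarith
  have hCC : Clo < Chi := by
    by_contra hcon
    push_neg at hcon
    have := (hmono Chi Clo hcon).1
    linarith
  -- the zero set of z ↦ βlam z j
  set T : Set ℝ := {z : ℝ | βlam z j = 0} with hTdef
  have hTclosed : IsClosed T := isClosed_eq hcont continuous_const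
  have hTne : T.Nonempty := by
    have hsub := intermediate_value_Icc hCC.le hcont.continuousOn
    have h0 : (0:ℝ) ∈ Set.Icc (βlam Clo j) (βlam Chi j) := ⟨hneg.le, hpos.le⟩
    obtain ⟨z₀, _, hz₀⟩ := hsub h0
    exact ⟨z₀, hz₀⟩
  have hTbb : BddBelow T := by
    refine ⟨Clo, fun z hz => ?_⟩
    by_contra hcon
    push_neg at hcon
    have h1 := (hmono z Clo hcon.le).1
    have h2 : βlam z j = 0 := hz
    linarith
  have hTba : BddAbove T := by
    refine ⟨Chi, fun z hz => ?_⟩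
    by_contra hcon
    push_neg at hcon
    have h1 := (hmono Chi z hcon.le).1
    have h2 : βlam z j = 0 := hz
    linarith
  set a : ℝ := sInf T with hadef
  set b : ℝ := sSup T with hbdef
  have haT : a ∈ T := hTclosed.csInf_mem hTne hTbb
  have hbT : b ∈ T := hTclosed.csSup_mem hTne hTba
  have hab : a ≤ b := csInf_le_csSup hTne hTbb hTba
  have haT' : βlam a j = 0 := haT
  have hbT' : βlam b j = 0 := hbT
  have hTIcc : T = Set.Icc a b := by
    ext z
    constructor
    · intro hz
      exact ⟨csInf_le hTbb hz, le_csSup hTba hz⟩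
    · rintro ⟨h1, h2⟩
      have l1 := (hmono a z h1).1
      have l2 := (hmono z b h2).1
      have : βlam z j = 0 := le_antisymm (by rw [← hbT']; exact l2) (by rw [← haT']; exact l1)
      exact this
  have hcompl : ∀ z : ℝ, βlam z j ≠ 0 ↔ (z < a ∨ b < z) := by
    intro z
    constructor
    · intro hz
      by_contra hcon
      push_neg at hcon
      have : z ∈ T := by rw [hTIcc]; exact ⟨le_of_not_gt (fun h => absurd h (by push_neg; exact hcon.1)), hcon.2⟩
      exact hz this
    · rintro (h | h) hz0
      · have : z ∈ Set.Icc a b := by rw [← hTIcc]; exact hz0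
        exact absurd this.1 (not_le.mpr h)
      · have : z ∈ Set.Icc a b := by rw [← hTIcc]; exact hz0
        exact absurd this.2 (not_le.mpr h)
  -- sign pattern sets
  set Bset : ({k // k ∈ H} → Bool) → Set ℝ := fun σ =>
    {z : ℝ | ∀ k : Fin p, (∀ hk : k ∈ H, if σ ⟨k, hk⟩ then 0 < βhigh z k else βhigh z k < 0)
      ∧ (k ∉ H → βhigh z k = 0)} with hBdef
  have hBoc : ∀ σ, (Bset σ).OrdConnected := by
    intro σ
    constructor
    intro z₀ hz₀ z₁ hz₁ z hz
    have hcompat : ∀ k, (0 < βhigh z₀ k ∧ 0 < βhigh z₁ k)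
        ∨ (βhigh z₀ k < 0 ∧ βhigh z₁ k < 0) ∨ (βhigh z₀ k = 0 ∧ βhigh z₁ k = 0) := by
      intro k
      by_cases hk : k ∈ H
      · have p₀ := (hz₀ k).1 hk
        have p₁ := (hz₁ k).1 hk
        by_cases hσ : σ ⟨k, hk⟩
        · rw [if_pos hσ] at p₀ p₁; exact Or.inl ⟨p₀, p₁⟩
        · rw [if_neg hσ] at p₀ p₁; exact Or.inr (Or.inl ⟨p₀, p₁⟩)
      · exact Or.inr (Or.inr ⟨(hz₀ k).2 hk, (hz₁ k).2 hk⟩)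
    obtain ⟨β, hsolβ, hsign⟩ := lasso_interp X ν c hlamHigh z₀ z₁ z hz
      (βhigh z₀) (βhigh z₁) (hβhigh z₀).1 (hβhigh z₁).1 hcompat
    have hβeq : β = βhigh z := (hβhigh z).2 β hsolβ
    intro k
    constructor
    · intro hk
      have p₀ := (hz₀ k).1 hk
      by_cases hσ : σ ⟨k, hk⟩
      · rw [if_pos hσ] at p₀ ⊢
        have := (hsign k).1 p₀
        rwa [hβeq] at this
      · rw [if_neg hσ] at p₀ ⊢
        have := (hsign k).2.1 p₀
        rwa [hβeq] at this
    · intro hk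
      have := (hsign k).2.2 ((hz₀ k).2 hk)
      rwa [hβeq] at this
  have hBunion : ∀ z : ℝ, ({k : Fin p | βhigh z k ≠ 0} = (H : Set (Fin p)))
      ↔ ∃ σ, z ∈ Bset σ := by
    intro z
    constructor
    · intro hz
      have hiff : ∀ k : Fin p, βhigh z k ≠ 0 ↔ k ∈ H := by
        intro k
        have := Set.ext_iff.mp hz k
        simpa using this
      refine ⟨fun k => decide (0 < βhigh z k.1), fun k => ⟨fun hk => ?_, fun hk => ?_⟩⟩
      · have hne : βhigh z k ≠ 0 := (hiff k).mpr hk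
        by_cases hp : 0 < βhigh z k
        · rw [if_pos (by simpa using hp)]
          exact hp
        · rw [if_neg (by simpa using hp)]
          exact lt_of_le_of_ne (le_of_not_gt hp) hne
      · by_contra hne
        exact hk ((hiff k).mp hne)
    · rintro ⟨σ, hσ⟩
      ext k
      simp only [Set.mem_setOf_eq, Finset.coe_sort_coe, Finset.mem_coe]
      constructor
      · intro hne
        by_contra hk
        exact hne ((hσ k).2 hk)
      · intro hk
        have := (hσ k).1 hk
        by_cases h : σ ⟨k, hk⟩
        · rw [if_pos h] at this; exact ne_of_gt this
        · rw [if_neg h] at this; exact ne_of_lt this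
  -- index the sign patterns by Fin (2 ^ H.card)
  have hcard : Fintype.card ({k // k ∈ H} → Bool) = 2 ^ H.card := by
    rw [Fintype.card_fun]
    simp [Fintype.card_coe]
  set e : ({k // k ∈ H} → Bool) ≃ Fin (2 ^ H.card) := Fintype.equivFinOfCardEq hcard with hedef
  refine ⟨a, b, hab, 2 ^ H.card, le_refl _, fun i => Bset (e.symm i), fun i => hBoc _, ?_⟩
  ext z
  simp only [Set.mem_setOf_eq, Set.mem_inter_iff, Set.mem_union, Set.mem_Iio, Set.mem_Ioi,
    Set.mem_iUnion]
  constructor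
  · rintro ⟨h1, h2⟩
    refine ⟨(hcompl z).mp h1, ?_⟩
    obtain ⟨σ, hσ⟩ := (hBunion z).mp h2
    exact ⟨e σ, by rwa [Equiv.symm_apply_apply]⟩
  · rintro ⟨h1, i, hi⟩
    exact ⟨(hcompl z).mpr h1, (hBunion z).mpr ⟨e.symm i, hi⟩⟩
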